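/- Let q ≤ −1 and consider the (|q|+3)×(|q|+3) symmetric integer matrix L_{0,q,−1} with first row (−1,−1,−1,…,−1), second row (−1,0,0,…,0), and lower-right (|q|+1)×(|q|+1) block equal to A_{|q|} (zero diagonal, −1 off-diagonal) in rows/columns 3 through |q|+3, with entries −1 in position (i,1) and (1,i) for all i, and 0 elsewhere in the second row/column beyond position 1. Then the signature of L_{0,q,−1} equals |q| − 1. -/

import Mathlib

/-- The signature of a real symmetric matrix: the number of positive eigenvalues
minus the number of negative eigenvalues. -/
noncomputable def matrixSignature {n : ℕ} (M : Matrix (Fin n) (Fin n) ℝ)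
    (hM : M.IsHermitian) : ℤ :=
  (Nat.card {i : Fin n // 0 < hM.eigenvalues i} : ℤ) -
    (Nat.card {i : Fin n // hM.eigenvalues i < 0} : ℤ)

/-- The `(|q|+3) × (|q|+3)` symmetric matrix `L_{0,q,-1}`: first row all `-1`,
second row `(-1,0,…,0)`, and the lower-right `(|q|+1) × (|q|+1)` block equal to
`A_{|q|}` (zero diagonal, `-1` off-diagonal), each of whose rows has `-1` in the
first column and `0` in the second. -/
def L7mat (s : ℕ) : Matrix (Fin (s + 3)) (Fin (s + 3)) ℝ :=
  Matrix.of fun i j =>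
    if (i : ℕ) = 0 ∨ (j : ℕ) = 0 then -1
    else if (i : ℕ) = 1 ∨ (j : ℕ) = 1 then 0
    else if i = j then 0 else -1


open Matrix Finset

lemma quad_eq_sum_eigs {n : ℕ} (M : Matrix (Fin n) (Fin n) ℝ) (hM : M.IsHermitian)
    (v : EuclideanSpace ℝ (Fin n)) :
    (v : Fin n → ℝ) ⬝ᵥ (M *ᵥ v) =
      ∑ i, hM.eigenvalues i * (inner ℝ (hM.eigenvectorBasis i) v : ℝ) ^ 2 := by
  set b := hM.eigenvectorBasis with hb
  set r : Fin n → ℝ := fun i => (inner ℝ (b i) v : ℝ) with hr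
  have hv : (∑ i, r i • b i : EuclideanSpace ℝ (Fin n)) = v := b.sum_repr' v
  have hmv : M *ᵥ (v : Fin n → ℝ) = ∑ i, (r i * hM.eigenvalues i) • (b i : Fin n → ℝ) := by
    conv_lhs => rw [← hv]
    push_cast
    rw [show ((∑ i, r i • b i : EuclideanSpace ℝ (Fin n)) : Fin n → ℝ)
        = ∑ i, r i • (b i : Fin n → ℝ) by rw [WithLp.ofLp_sum]; rfl]
    rw [show (M *ᵥ ∑ i, r i • (b i : Fin n → ℝ)) = M.mulVecLin (∑ i, r i • (b i : Fin n → ℝ)) from rfl,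
      map_sum]
    refine Finset.sum_congr rfl fun i _ => ?_
    rw [_root_.map_smul]
    rw [show M.mulVecLin (b i : Fin n → ℝ) = M *ᵥ (b i : Fin n → ℝ) from rfl,
      show M *ᵥ (b i : Fin n → ℝ) = hM.eigenvalues i • (b i : Fin n → ℝ) from hM.mulVec_eigenvectorBasis i, smul_smul, mul_comm]
  calc (v : Fin n → ℝ) ⬝ᵥ (M *ᵥ v) = (inner ℝ v (WithLp.toLp 2 (M *ᵥ v) : EuclideanSpace ℝ (Fin n)) : ℝ) := by
        simp [PiLp.inner_apply, dotProduct, mul_comm]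
    _ = ∑ i, hM.eigenvalues i * r i ^ 2 := by
        rw [hmv]
        rw [show (WithLp.toLp 2 (∑ i, (r i * hM.eigenvalues i) • (b i : Fin n → ℝ)) : EuclideanSpace ℝ (Fin n))
            = (∑ i, (r i * hM.eigenvalues i) • b i : EuclideanSpace ℝ (Fin n)) by rw [WithLp.toLp_sum]; rfl]
        rw [inner_sum]
        refine Finset.sum_congr rfl fun i _ => ?_
        rw [real_inner_smul_right, real_inner_comm]
        simp [hr]
        ring

lemma key_pos {n k : ℕ} (M : Matrix (Fin n) (Fin n) ℝ) (hM : M.IsHermitian)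
    (f : Fin k → (Fin n → ℝ))
    (hf : ∀ c : Fin k → ℝ, c ≠ 0 → 0 < (∑ i, c i • f i) ⬝ᵥ (M *ᵥ (∑ i, c i • f i))) :
    k ≤ Nat.card {i : Fin n // 0 < hM.eigenvalues i} := by
  classical
  set b := hM.eigenvectorBasis with hb
  set Φ : (Fin k → ℝ) →ₗ[ℝ] ({i : Fin n // 0 < hM.eigenvalues i} → ℝ) :=
    { toFun := fun c p => (inner ℝ (b p.1) (WithLp.toLp 2 (∑ i, c i • f i : Fin n → ℝ) : EuclideanSpace ℝ (Fin n)) : ℝ)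
      map_add' := by
        intro c c'
        funext p
        simp only [Pi.add_apply, add_smul, Finset.sum_add_distrib, WithLp.toLp_add]
        exact inner_add_right _ _ _
      map_smul' := by
        intro a c
        funext p
        simp only [Pi.smul_apply, smul_eq_mul, ← smul_smul, ← Finset.smul_sum, RingHom.id_apply, WithLp.toLp_smul]
        exact real_inner_smul_right _ _ _ } with hΦ
  have hinj : Function.Injective Φ := by
    rw [← LinearMap.ker_eq_bot, LinearMap.ker_eq_bot']
    intro c hc
    by_contra hc0
    have h1 := hf c hc0
    rw [quad_eq_sum_eigs M hM] at h1
    have h2 : ∑ i, hM.eigenvalues i *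
        (inner ℝ (b i) (WithLp.toLp 2 (∑ i, c i • f i : Fin n → ℝ) : EuclideanSpace ℝ (Fin n)) : ℝ) ^ 2 ≤ 0 := by
      apply Finset.sum_nonpos
      intro i _
      by_cases hi : 0 < hM.eigenvalues i
      · have : (inner ℝ (b i) (WithLp.toLp 2 (∑ i, c i • f i : Fin n → ℝ) : EuclideanSpace ℝ (Fin n)) : ℝ) = 0 :=
          congrFun hc ⟨i, hi⟩
        rw [this]
        ring_nf
        exact le_refl 0
      · exact mul_nonpos_of_nonpos_of_nonneg (not_lt.mp hi) (sq_nonneg _)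
    exact absurd h1 (not_lt.mpr h2)
  have := LinearMap.finrank_le_finrank_of_injective hinj
  simpa [Nat.card_eq_fintype_card] using this

lemma key_neg {n k : ℕ} (M : Matrix (Fin n) (Fin n) ℝ) (hM : M.IsHermitian)
    (f : Fin k → (Fin n → ℝ))
    (hf : ∀ c : Fin k → ℝ, c ≠ 0 → (∑ i, c i • f i) ⬝ᵥ (M *ᵥ (∑ i, c i • f i)) < 0) :
    k ≤ Nat.card {i : Fin n // hM.eigenvalues i < 0} := by
  classical
  set b := hM.eigenvectorBasis with hb
  set Φ : (Fin k → ℝ) →ₗ[ℝ] ({i : Fin n // hM.eigenvalues i < 0} → ℝ) :=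
    { toFun := fun c p => (inner ℝ (b p.1) (WithLp.toLp 2 (∑ i, c i • f i : Fin n → ℝ) : EuclideanSpace ℝ (Fin n)) : ℝ)
      map_add' := by
        intro c c'
        funext p
        simp only [Pi.add_apply, add_smul, Finset.sum_add_distrib, WithLp.toLp_add]
        exact inner_add_right _ _ _
      map_smul' := by
        intro a c
        funext p
        simp only [Pi.smul_apply, smul_eq_mul, ← smul_smul, ← Finset.smul_sum, RingHom.id_apply, WithLp.toLp_smul]
        exact real_inner_smul_right _ _ _ } with hΦ
  have hinj : Function.Injective Φ := by
    rw [← LinearMap.ker_eq_bot, LinearMap.ker_eq_bot']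
    intro c hc
    by_contra hc0
    have h1 := hf c hc0
    rw [quad_eq_sum_eigs M hM] at h1
    have h2 : 0 ≤ ∑ i, hM.eigenvalues i *
        (inner ℝ (b i) (WithLp.toLp 2 (∑ i, c i • f i : Fin n → ℝ) : EuclideanSpace ℝ (Fin n)) : ℝ) ^ 2 := by
      apply Finset.sum_nonneg
      intro i _
      by_cases hi : hM.eigenvalues i < 0
      · have : (inner ℝ (b i) (WithLp.toLp 2 (∑ i, c i • f i : Fin n → ℝ) : EuclideanSpace ℝ (Fin n)) : ℝ) = 0 :=
          congrFun hc ⟨i, hi⟩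
        rw [this]
        ring_nf
        exact le_refl 0
      · exact mul_nonneg (not_lt.mp hi) (sq_nonneg _)
    exact absurd h1 (not_lt.mpr h2)
  have := LinearMap.finrank_le_finrank_of_injective hinj
  simpa [Nat.card_eq_fintype_card] using this

lemma fin_expand (s : ℕ) (g : Fin (s+3) → ℝ) :
    ∑ i, g i = g 0 + g 1 + ∑ i : Fin (s+1), g i.succ.succ := by
  rw [Fin.sum_univ_succ, Fin.sum_univ_succ, Fin.succ_zero_eq_one]
  ring

lemma L7_quad (s : ℕ) (v : Fin (s+3) → ℝ) :
    v ⬝ᵥ (L7mat s *ᵥ v) =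
      -(v 0)^2 - 2*(v 0)*(v 1) - 2*(v 0)*(∑ k : Fin (s+1), v k.succ.succ)
        - (∑ k : Fin (s+1), v k.succ.succ)^2 + ∑ k : Fin (s+1), (v k.succ.succ)^2 := by
  have hval1 : ((1 : Fin (s+3)) : ℕ) = 1 := rfl
  have hvalss : ∀ k : Fin (s+1), ((k.succ.succ : Fin (s+3)) : ℕ) = (k : ℕ) + 2 := by
    intro k; simp [Fin.val_succ]
  set S := ∑ k : Fin (s+1), v k.succ.succ with hS
  set T := ∑ k : Fin (s+1), (v k.succ.succ)^2 with hT
  have row0 : ∀ j, L7mat s 0 j = -1 := fun j => by simp [L7mat]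
  have entry10 : L7mat s 1 0 = -1 := by simp [L7mat]
  have entry11 : L7mat s 1 1 = 0 := by simp [L7mat, hval1]
  have entry1b : ∀ j : Fin (s+1), L7mat s 1 j.succ.succ = 0 := by
    intro j
    simp only [L7mat, Matrix.of_apply, hvalss, hval1]
    simp
  have entry0 : ∀ k : Fin (s+1), L7mat s k.succ.succ 0 = -1 := fun k => by simp [L7mat]
  have entry1 : ∀ k : Fin (s+1), L7mat s k.succ.succ 1 = 0 := by
    intro k
    simp only [L7mat, Matrix.of_apply, hvalss, hval1]
    simp
  have entryblk : ∀ k j : Fin (s+1),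
      L7mat s k.succ.succ j.succ.succ = if k = j then 0 else -1 := by
    intro k j
    simp only [L7mat, Matrix.of_apply, hvalss]
    simp [Fin.succ_inj]
  have hmv : ∀ i, (L7mat s *ᵥ v) i = ∑ j, L7mat s i j * v j := fun i => rfl
  have hrow0 : ∑ j, L7mat s 0 j * v j = -(v 0) - v 1 - S := by
    rw [fin_expand s (fun j => L7mat s 0 j * v j)]
    simp only [row0, neg_one_mul]
    rw [Finset.sum_neg_distrib, ← hS]
    ring
  have hrow1 : ∑ j, L7mat s 1 j * v j = -(v 0) := by
    rw [fin_expand s (fun j => L7mat s 1 j * v j)]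
    simp only [entry10, entry11, entry1b]
    simp
  have hrowk : ∀ k : Fin (s+1), ∑ j, L7mat s k.succ.succ j * v j
      = -(v 0) + (v k.succ.succ - S) := by
    intro k
    rw [fin_expand s (fun j => L7mat s k.succ.succ j * v j)]
    rw [entry0, entry1]
    have hb : ∀ j : Fin (s+1), L7mat s k.succ.succ j.succ.succ * v j.succ.succ
        = -(v j.succ.succ) + (if k = j then v j.succ.succ else 0) := by
      intro j
      rw [entryblk]
      by_cases h : k = j <;> simp [h]
    rw [Finset.sum_congr rfl fun j _ => hb j, Finset.sum_add_distrib,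
      Finset.sum_ite_eq, Finset.sum_neg_distrib, ← hS]
    simp
    ring
  rw [dotProduct, fin_expand s (fun i => v i * (L7mat s *ᵥ v) i)]
  simp only [hmv]
  rw [hrow0, hrow1, Finset.sum_congr rfl fun k _ => by rw [hrowk k]]
  have hlast : ∑ k : Fin (s+1), v k.succ.succ * (-(v 0) + (v k.succ.succ - S))
      = -(v 0) * S + T - S * S := by
    have e2 : ∀ k : Fin (s+1), v k.succ.succ * (-(v 0) + (v k.succ.succ - S))
        = -(v 0) * v k.succ.succ + (v k.succ.succ)^2 - S * v k.succ.succ := fun k => by ring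
    rw [Finset.sum_congr rfl fun k _ => e2 k, Finset.sum_sub_distrib, Finset.sum_add_distrib,
      ← Finset.mul_sum, ← Finset.mul_sum, ← hS, ← hT]
  rw [hlast]
  ring

noncomputable def fneg (s : ℕ) : Fin 2 → (Fin (s+3) → ℝ) := fun i =>
  if i = 0 then (fun m => if (m : ℕ) = 0 then 1 else 0)
  else (fun m => if (m : ℕ) = 0 then 0 else if (m : ℕ) = 1 then -(s+1) else 1)

lemma fneg_quad (s : ℕ) (hs : 1 ≤ s) (c : Fin 2 → ℝ) (hc : c ≠ 0) :
    (∑ i, c i • fneg s i) ⬝ᵥ (L7mat s *ᵥ (∑ i, c i • fneg s i)) < 0 := by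
  set v : Fin (s+3) → ℝ := ∑ i, c i • fneg s i with hv
  have hval1 : ((1 : Fin (s+3)) : ℕ) = 1 := rfl
  have hvalss : ∀ k : Fin (s+1), ((k.succ.succ : Fin (s+3)) : ℕ) = (k : ℕ) + 2 := by
    intro k; simp [Fin.val_succ]
  have hvm : ∀ m, v m = c 0 * fneg s 0 m + c 1 * fneg s 1 m := by
    intro m
    rw [hv, Fin.sum_univ_two]
    rfl
  have hv0 : v 0 = c 0 := by rw [hvm]; simp [fneg]
  have hv1 : v 1 = -(s+1) * c 1 := by rw [hvm]; simp [fneg, hval1]; ring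
  have hw : ∀ k : Fin (s+1), v k.succ.succ = c 1 := by
    intro k
    rw [hvm]
    simp [fneg, hvalss k]
  have hS : ∑ k : Fin (s+1), v k.succ.succ = (s+1 : ℝ) * c 1 := by
    rw [Finset.sum_congr rfl fun k _ => hw k]
    simp [Finset.sum_const, mul_comm]
  have hT : ∑ k : Fin (s+1), (v k.succ.succ)^2 = (s+1 : ℝ) * (c 1)^2 := by
    rw [Finset.sum_congr rfl fun k _ => by rw [hw k]]
    simp [Finset.sum_const, mul_comm]
  rw [L7_quad, hv0, hv1, hS, hT]
  have heq : -(c 0)^2 - 2*(c 0)*(-(s+1) * c 1) - 2*(c 0)*((s+1:ℝ) * c 1)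
      - ((s+1:ℝ) * c 1)^2 + (s+1:ℝ) * (c 1)^2
      = -(c 0)^2 - (s * (s+1) : ℝ) * (c 1)^2 := by ring
  rw [heq]
  have h01 : c 0 ≠ 0 ∨ c 1 ≠ 0 := by
    by_contra h
    push_neg at h
    apply hc
    funext i
    fin_cases i
    · exact h.1
    · exact h.2
  have hs' : (1 : ℝ) ≤ s := by exact_mod_cast hs
  rcases h01 with h | h
  · have h0 : 0 < (c 0)^2 := by positivity
    nlinarith [sq_nonneg (c 1)]
  · have h1 : 0 < (c 1)^2 := by positivity
    nlinarith [sq_nonneg (c 0)]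

noncomputable def fpos (s : ℕ) : Fin (s+1) → (Fin (s+3) → ℝ) := fun i =>
  Fin.cases (fun m => if (m : ℕ) = 0 then 1 else if (m : ℕ) = 1 then -1 else 0)
    (fun j m => if (m : ℕ) = (j : ℕ) + 2 then 1 else if (m : ℕ) = s + 2 then -1 else 0) i

lemma fpos_quad (s : ℕ) (c : Fin (s+1) → ℝ) (hc : c ≠ 0) :
    0 < (∑ i, c i • fpos s i) ⬝ᵥ (L7mat s *ᵥ (∑ i, c i • fpos s i)) := by
  set v : Fin (s+3) → ℝ := ∑ i, c i • fpos s i with hv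
  have hval1 : ((1 : Fin (s+3)) : ℕ) = 1 := rfl
  have hvalss : ∀ k : Fin (s+1), ((k.succ.succ : Fin (s+3)) : ℕ) = (k : ℕ) + 2 := by
    intro k; simp [Fin.val_succ]
  have hvm : ∀ m, v m = c 0 * fpos s 0 m + ∑ j : Fin s, c j.succ * fpos s j.succ m := by
    intro m
    rw [hv]
    rw [show (∑ i, c i • fpos s i) m = ∑ i, c i * fpos s i m by
      simp [Finset.sum_apply]]
    rw [Fin.sum_univ_succ]
  have hf00 : fpos s 0 (0 : Fin (s+3)) = 1 := by simp [fpos]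
  have hf01 : fpos s 0 (1 : Fin (s+3)) = -1 := by simp [fpos, hval1]
  have hf0b : ∀ k : Fin (s+1), fpos s 0 k.succ.succ = 0 := by
    intro k; simp [fpos, hvalss k]
  have hfs0 : ∀ j : Fin s, fpos s j.succ (0 : Fin (s+3)) = 0 := by
    intro j; simp [fpos]
  have hfs1 : ∀ j : Fin s, fpos s j.succ (1 : Fin (s+3)) = 0 := by
    intro j; simp [fpos, hval1]
  have hfsb : ∀ (j : Fin s) (k : Fin (s+1)), fpos s j.succ k.succ.succ
      = if (k : ℕ) = (j : ℕ) then 1 else if (k : ℕ) = s then -1 else 0 := by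
    intro j k
    simp only [fpos, Fin.cases_succ, hvalss k]
    rcases Nat.decEq (k : ℕ) (j : ℕ) with h | h
    · rw [if_neg (by omega), if_neg h]
      rcases Nat.decEq (k : ℕ) s with h2 | h2
      · rw [if_neg (by omega), if_neg h2]
      · rw [if_pos (by omega), if_pos h2]
    · rw [if_pos (by omega), if_pos h]
  have hv0 : v 0 = c 0 := by
    rw [hvm, hf00]
    simp [hfs0]
  have hv1 : v 1 = -(c 0) := by
    rw [hvm, hf01]
    simp [hfs1]
  have hw : ∀ k : Fin (s+1), v k.succ.succ
      = ∑ j : Fin s, c j.succ * (if (k : ℕ) = (j : ℕ) then 1 else if (k : ℕ) = s then -1 else 0) := by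
    intro k
    rw [hvm, hf0b]
    simp only [hfsb]
    ring
  have hS : ∑ k : Fin (s+1), v k.succ.succ = 0 := by
    rw [Finset.sum_congr rfl fun k _ => hw k, Finset.sum_comm]
    apply Finset.sum_eq_zero
    intro j _
    rw [← Finset.mul_sum]
    have hsplit : ∀ k : Fin (s+1),
        (if (k : ℕ) = (j : ℕ) then (1:ℝ) else if (k : ℕ) = s then -1 else 0)
        = (if k = Fin.castSucc j then 1 else 0) + (if k = Fin.last s then -1 else 0) := by
      intro k
      have hjlt : (j : ℕ) < s := j.isLt
      have h1 : ((k : ℕ) = (j : ℕ)) ↔ k = Fin.castSucc j := by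
        rw [Fin.ext_iff, Fin.coe_castSucc]
      have h2 : ((k : ℕ) = s) ↔ k = Fin.last s := by
        rw [Fin.ext_iff, Fin.val_last]
      by_cases hk1 : (k : ℕ) = (j : ℕ)
      · rw [if_pos hk1, if_pos (h1.mp hk1), if_neg (by rw [← h2]; omega)]
        ring
      · rw [if_neg hk1, if_neg (fun h => hk1 (h1.mpr h))]
        by_cases hk2 : (k : ℕ) = s
        · rw [if_pos hk2, if_pos (h2.mp hk2)]; ring
        · rw [if_neg hk2, if_neg (fun h => hk2 (h2.mpr h))]; ring
    rw [Finset.sum_congr rfl fun k _ => hsplit k, Finset.sum_add_distrib,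
      Finset.sum_ite_eq', Finset.sum_ite_eq']
    simp
  have hwc : ∀ j : Fin s, v (Fin.castSucc j).succ.succ = c j.succ := by
    intro j
    rw [hw]
    have : ∀ j' : Fin s, c j'.succ * (if ((Fin.castSucc j : Fin (s+1)) : ℕ) = (j' : ℕ) then (1:ℝ)
        else if ((Fin.castSucc j : Fin (s+1)) : ℕ) = s then -1 else 0)
        = if j' = j then c j'.succ else 0 := by
      intro j'
      rw [Fin.coe_castSucc]
      by_cases h : (j : ℕ) = (j' : ℕ)
      · rw [if_pos h, if_pos (by rw [Fin.ext_iff]; omega)]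
        ring
      · rw [if_neg h, if_neg (by omega), if_neg (by rw [Fin.ext_iff]; omega)]
        ring
    rw [Finset.sum_congr rfl fun j' _ => this j', Finset.sum_ite_eq']
    simp
  have hQ : v ⬝ᵥ (L7mat s *ᵥ v) = (c 0)^2 + ∑ k : Fin (s+1), (v k.succ.succ)^2 := by
    rw [L7_quad, hv0, hv1, hS]
    ring
  rw [hQ]
  have hTnn : (0:ℝ) ≤ ∑ k : Fin (s+1), (v k.succ.succ)^2 :=
    Finset.sum_nonneg fun k _ => sq_nonneg _
  obtain ⟨i, hi⟩ := Function.ne_iff.mp hc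
  rcases Fin.eq_zero_or_eq_succ i with h0 | ⟨j, hj⟩
  · have : 0 < (c 0)^2 := by
      rw [h0] at hi
      exact lt_of_le_of_ne (sq_nonneg _) (Ne.symm (pow_ne_zero 2 hi))
    linarith
  · have hterm : 0 < (v (Fin.castSucc j).succ.succ)^2 := by
      rw [hwc j, ← hj]
      exact lt_of_le_of_ne (sq_nonneg _) (Ne.symm (pow_ne_zero 2 hi))
    have hle : (v (Fin.castSucc j).succ.succ)^2 ≤ ∑ k : Fin (s+1), (v k.succ.succ)^2 :=
      Finset.single_le_sum (f := fun k : Fin (s+1) => (v k.succ.succ)^2)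
        (fun k _ => sq_nonneg _) (Finset.mem_univ _)
    nlinarith [sq_nonneg (c 0)]

/-- For `q ≤ -1`, the signature of `L_{0,q,-1}` equals `|q| - 1`. -/
theorem signature_L_zero_q_minusone (q : ℤ) (hq : q ≤ -1)
    (hM : (L7mat q.natAbs).IsHermitian) :
    matrixSignature (L7mat q.natAbs) hM = (q.natAbs : ℤ) - 1 := by
  classical
  have hs : 1 ≤ q.natAbs := by omega
  have hP : q.natAbs + 1 ≤ Nat.card {i : Fin (q.natAbs+3) // 0 < hM.eigenvalues i} :=
    key_pos (L7mat q.natAbs) hM (fpos q.natAbs) (fun c hc => fpos_quad q.natAbs c hc)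
  have hN : 2 ≤ Nat.card {i : Fin (q.natAbs+3) // hM.eigenvalues i < 0} :=
    key_neg (L7mat q.natAbs) hM (fneg q.natAbs) (fun c hc => fneg_quad q.natAbs hs c hc)
  have hPN : Nat.card {i : Fin (q.natAbs+3) // 0 < hM.eigenvalues i}
      + Nat.card {i : Fin (q.natAbs+3) // hM.eigenvalues i < 0} ≤ q.natAbs + 3 := by
    rw [Nat.card_eq_fintype_card, Nat.card_eq_fintype_card,
      Fintype.card_subtype, Fintype.card_subtype]
    have hdisj : Disjoint (Finset.univ.filter fun i : Fin (q.natAbs+3) => 0 < hM.eigenvalues i)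
        (Finset.univ.filter fun i : Fin (q.natAbs+3) => hM.eigenvalues i < 0) := by
      rw [Finset.disjoint_left]
      intro i h1 h2
      rw [Finset.mem_filter] at h1 h2
      exact absurd h2.2 (not_lt.mpr (le_of_lt h1.2))
    calc (Finset.univ.filter fun i : Fin (q.natAbs+3) => 0 < hM.eigenvalues i).card
          + (Finset.univ.filter fun i : Fin (q.natAbs+3) => hM.eigenvalues i < 0).card
        = ((Finset.univ.filter fun i : Fin (q.natAbs+3) => 0 < hM.eigenvalues i)
            ∪ (Finset.univ.filter fun i : Fin (q.natAbs+3) => hM.eigenvalues i < 0)).card :=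
          (Finset.card_union_of_disjoint hdisj).symm
      _ ≤ (Finset.univ : Finset (Fin (q.natAbs+3))).card :=
          Finset.card_le_card (Finset.union_subset (Finset.filter_subset _ _)
            (Finset.filter_subset _ _))
      _ = q.natAbs + 3 := by simp
  unfold matrixSignature
  omega
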